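/- Let A be a unital Banach algebra and X a unit-linked Banach A-bimodule. Let p < 1 and θ ≥ 0. Suppose f : A → X satisfies f(0) = 0 and g : A → X satisfies g(0) = g(1) = 0, such that ‖f(a + λb + c²) − f(a) − λf(b) − c·f(c) − g(c)·c‖ ≤ θ‖f(c)‖ and ‖g(λab + λc) − λa·g(b) − λ·g(a)·b − λg(c)‖ ≤ θ(‖a‖^p + ‖b‖^p + ‖c‖^p) for all a, b, c ∈ A and all λ ∈ ℂ with |λ| = 1. Then the limit δ(c) := lim_{n→∞} 2^{−n} g(2^n c) exists for every c ∈ A, and f(c²) = c·f(c) + δ(c)·c for all c ∈ A. -/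

import Mathlib

open Filter Topology MulOpposite

set_option linter.unusedSectionVars false
set_option linter.unusedVariables false

section

variable {A X : Type*}
  [NormedRing A] [NormedAlgebra ℂ A] [CompleteSpace A]
  [NormedAddCommGroup X] [NormedSpace ℂ X] [CompleteSpace X]
  [Module A X] [Module Aᵐᵒᵖ X]
  [IsBoundedSMul A X] [IsBoundedSMul Aᵐᵒᵖ X]
  [SMulCommClass A Aᵐᵒᵖ X]
  [IsScalarTower ℂ A X] [IsScalarTower ℂ Aᵐᵒᵖ X]

/-- A Jordan derivation from `A` into the bimodule `X`: a `ℂ`-linear map `δ` with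
`δ(a²) = a·δ(a) + δ(a)·a`. -/
def IsJordanDeriv (δ : A → X) : Prop :=
  (∀ x y : A, δ (x + y) = δ x + δ y) ∧ (∀ (μ : ℂ) (x : A), δ (μ • x) = μ • δ x) ∧
    ∀ a : A, δ (a ^ 2) = a • δ a + op a • δ a

/-- A generalized Jordan derivation: a `ℂ`-linear map `d` such that there is a Jordan
derivation `δ` with `d(a²) = a·d(a) + δ(a)·a`. -/
def IsGenJordanDeriv (d : A → X) : Prop :=
  (∀ x y : A, d (x + y) = d x + d y) ∧ (∀ (μ : ℂ) (x : A), d (μ • x) = μ • d x) ∧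
    ∃ δ : A → X, IsJordanDeriv δ ∧ ∀ a : A, d (a ^ 2) = a • d a + op a • δ a

theorem stmt (f g : A → X) (θ p : ℝ) (hθ : 0 ≤ θ) (hp : p < 1)
    (hf0 : f 0 = 0) (hg0 : g 0 = 0) (hg1 : g 1 = 0)
    (h1 : ∀ (a b c : A) (μ : ℂ), ‖μ‖ = 1 →
      ‖f (a + μ • b + c ^ 2) - f a - μ • f b - c • f c - op c • g c‖ ≤ θ * ‖f c‖)
    (h2 : ∀ (a b c : A) (μ : ℂ), ‖μ‖ = 1 →
      ‖g (μ • (a * b) + μ • c) - μ • a • g b - μ • op b • g a - μ • g c‖ ≤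
        θ * (‖a‖ ^ p + ‖b‖ ^ p + ‖c‖ ^ p)) :
    ∃ δ : A → X, (∀ c : A, Tendsto (fun n : ℕ => ((2 : ℂ) ^ n)⁻¹ • g ((2 : ℂ) ^ n • c)) atTop (𝓝 (δ c))) ∧
      ∀ c : A, f (c ^ 2) = c • f c + op c • δ c := by
  -- f is additive
  have hfadd : ∀ a b : A, f (a + b) = f a + f b := by
    intro a b
    have h := h1 a b 0 1 (by norm_num)
    simp only [one_smul, ne_eq, OfNat.ofNat_ne_zero, not_false_eq_true, zero_pow, add_zero,
      hf0, hg0, smul_zero, sub_zero, norm_zero, mul_zero, op_zero] at h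
    have := norm_le_zero_iff.mp h
    rw [sub_sub, sub_eq_zero] at this
    exact this
  -- f of nsmul
  have hfn : ∀ (n : ℕ) (x : A), f (n • x) = n • f x := by
    intro n x
    induction n with
    | zero => simpa using hf0
    | succ k ih => rw [succ_nsmul, succ_nsmul, hfadd, ih]
  -- key estimate on g
  have hg2 : ∀ c : A, ‖g (c + c) - (g c + g c)‖ ≤ θ * (‖c‖ ^ p + ‖(1 : A)‖ ^ p + ‖c‖ ^ p) := by
    intro c
    have h := h2 c 1 c 1 (by norm_num)
    simp only [one_smul, mul_one, hg1, smul_zero, op_one, sub_zero] at h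
    calc ‖g (c + c) - (g c + g c)‖ = ‖g (c + c) - g c - g c‖ := by rw [sub_sub]
    _ ≤ _ := h
  have h2ne : ∀ n : ℕ, ((2:ℂ)^n) ≠ 0 := fun n => pow_ne_zero n two_ne_zero
  have hpow : ∀ n : ℕ, ((2:ℝ)^n) ^ p = ((2:ℝ)^p)^n := by
    intro n
    rw [← Real.rpow_natCast 2 n, ← Real.rpow_natCast (2 ^ p) n,
      ← Real.rpow_mul (by norm_num), ← Real.rpow_mul (by norm_num), mul_comm]
  set r : ℝ := max (2^(p-1)) 2⁻¹ with hr
  have hr0 : (0:ℝ) ≤ 2^(p-1) := Real.rpow_nonneg (by norm_num) _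
  have hr1 : r < 1 :=
    max_lt (Real.rpow_lt_one_of_one_lt_of_neg one_lt_two (by linarith)) (by norm_num)
  have hnx : ∀ (c : A) (n : ℕ), ‖(2:ℂ)^n • c‖ = 2^n * ‖c‖ := by
    intro c n
    rw [norm_smul]
    norm_num
  have hdiff : ∀ (c : A) (n : ℕ),
      ((2:ℂ)^n)⁻¹ • g ((2:ℂ)^n • c) - ((2:ℂ)^(n+1))⁻¹ • g ((2:ℂ)^(n+1) • c)
      = -(((2:ℂ)^(n+1))⁻¹ • (g ((2:ℂ)^n • c + (2:ℂ)^n • c)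
          - (g ((2:ℂ)^n • c) + g ((2:ℂ)^n • c)))) := by
    intro c n
    have e1 : (2:ℂ)^(n+1) • c = (2:ℂ)^n • c + (2:ℂ)^n • c := by
      rw [pow_succ', mul_smul, two_smul]
    have e2 : ((2:ℂ)^n)⁻¹ = ((2:ℂ)^(n+1))⁻¹ + ((2:ℂ)^(n+1))⁻¹ := by
      field_simp
      ring
    rw [e1, e2, add_smul, smul_sub, smul_add]
    abel
  have hcau : ∀ c : A, CauchySeq (fun n : ℕ => ((2:ℂ)^n)⁻¹ • g ((2:ℂ)^n • c)) := by
    intro c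
    apply SeminormedAddCommGroup.cauchySeq_of_le_geometric (C := θ * (‖c‖^p + ‖(1:A)‖^p + ‖c‖^p)) hr1
    intro n
    have hb : ((2:ℝ)^(n+1))⁻¹ ≤ r^n := by
      have : ((2:ℝ)^(n+1))⁻¹ ≤ ((2:ℝ)^n)⁻¹ := by
        apply inv_anti₀ (by positivity)
        apply pow_le_pow_right₀ (by norm_num) (by omega)
      refine this.trans ?_
      rw [← inv_pow]
      exact pow_le_pow_left₀ (by norm_num) (le_max_right _ _) n
    have ha : ((2:ℝ)^p)^n * ((2:ℝ)^(n+1))⁻¹ ≤ r^n := by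
      have e : ((2:ℝ)^p)^n * ((2:ℝ)^(n+1))⁻¹ = ((2:ℝ)^p/2)^n * 2⁻¹ := by
        rw [div_pow]
        rw [pow_succ]
        field_simp
      rw [e, Real.rpow_sub (by norm_num) p 1] at *
      have : ((2:ℝ)^p/2^(1:ℝ))^n ≤ r^n := by
        apply pow_le_pow_left₀ _ _ n
        · rw [Real.rpow_one]; positivity
        · rw [Real.rpow_one] at *
          calc (2:ℝ)^p/2 = 2^(p-1) := by
                rw [Real.rpow_sub (by norm_num), Real.rpow_one]
          _ ≤ r := le_max_left _ _
      nlinarith [pow_nonneg (show (0:ℝ) ≤ 2^p/2^(1:ℝ) by rw [Real.rpow_one]; positivity) n]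
    have hxp : ‖(2:ℂ)^n • c‖^p = ((2:ℝ)^p)^n * ‖c‖^p := by
      rw [hnx, Real.mul_rpow (by positivity) (norm_nonneg c), hpow]
    have hnn : ∀ y : A, (0:ℝ) ≤ ‖y‖^p := fun y => Real.rpow_nonneg (norm_nonneg y) p
    calc ‖((2:ℂ)^n)⁻¹ • g ((2:ℂ)^n • c) - ((2:ℂ)^(n+1))⁻¹ • g ((2:ℂ)^(n+1) • c)‖
        = ((2:ℝ)^(n+1))⁻¹ * ‖g ((2:ℂ)^n • c + (2:ℂ)^n • c)
            - (g ((2:ℂ)^n • c) + g ((2:ℂ)^n • c))‖ := by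
          rw [hdiff, norm_neg, norm_smul]
          norm_num
      _ ≤ ((2:ℝ)^(n+1))⁻¹ * (θ * (‖(2:ℂ)^n • c‖^p + ‖(1:A)‖^p + ‖(2:ℂ)^n • c‖^p)) := by
          apply mul_le_mul_of_nonneg_left (hg2 _) (by positivity)
      _ = θ * ((((2:ℝ)^p)^n * ((2:ℝ)^(n+1))⁻¹) * ‖c‖^p + ((2:ℝ)^(n+1))⁻¹ * ‖(1:A)‖^p
            + (((2:ℝ)^p)^n * ((2:ℝ)^(n+1))⁻¹) * ‖c‖^p) := by
          rw [hxp]; ring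
      _ ≤ θ * (r^n * ‖c‖^p + r^n * ‖(1:A)‖^p + r^n * ‖c‖^p) := by
          apply mul_le_mul_of_nonneg_left _ hθ
          have h1 := mul_le_mul_of_nonneg_right ha (hnn c)
          have h2 := mul_le_mul_of_nonneg_right hb (hnn 1)
          linarith
      _ = (θ * (‖c‖^p + ‖(1:A)‖^p + ‖c‖^p)) * r^n := by ring
  have hex : ∀ c : A, ∃ L : X, Tendsto (fun n : ℕ => ((2:ℂ)^n)⁻¹ • g ((2:ℂ)^n • c)) atTop (𝓝 L) :=
    fun c => cauchySeq_tendsto_of_complete (hcau c)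
  choose δ hδ using hex
  refine ⟨δ, hδ, ?_⟩
  intro c
  have hfc : ∀ (k : ℕ) (y : A), f ((k:ℂ) • y) = (k:ℂ) • f y := by
    intro k y
    rw [Nat.cast_smul_eq_nsmul, hfn, ← Nat.cast_smul_eq_nsmul ℂ]
  have hbound2 : ∀ n : ℕ, ‖f (c^2) - (c • f c + op c • (((2:ℂ)^n)⁻¹ • g ((2:ℂ)^n • c)))‖
      ≤ θ * ‖f c‖ * (2⁻¹:ℝ)^n := by
    intro n
    set μ : ℂ := (2:ℂ)^n with hμ
    have hμ0 : μ ≠ 0 := h2ne n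
    have hcast : μ = ((2^n : ℕ) : ℂ) := by push_cast; rfl
    have h := h1 0 0 (μ • c) 1 (by norm_num)
    simp only [one_smul, zero_add, hf0, sub_zero, smul_zero] at h
    have e3 : f (μ • c) = μ • f c := by rw [hcast, hfc]
    have e1 : (μ • c)^2 = (μ*μ) • c^2 := by rw [smul_pow, ← sq]
    have e2 : f ((μ*μ) • c^2) = (μ*μ) • f (c^2) := by
      have : μ * μ = ((2^n * 2^n : ℕ) : ℂ) := by push_cast; rw [hcast]; push_cast; ring
      rw [this, hfc]
    have e4 : (μ • c) • f (μ • c) = (μ*μ) • (c • f c) := by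
      rw [e3, smul_assoc, smul_comm c μ (f c), smul_smul]
    have e5 : op (μ • c) • g (μ • c) = μ • (op c • g (μ • c)) := by
      rw [op_smul, smul_assoc]
    have hid : f (c^2) - (c • f c + op c • (μ⁻¹ • g (μ • c)))
        = (μ*μ)⁻¹ • (f ((μ • c)^2) - (μ • c) • f (μ • c) - op (μ • c) • g (μ • c)) := by
      rw [e1, e2, e4, e5, smul_sub, smul_sub, smul_smul, smul_smul,
        inv_mul_cancel₀ (mul_ne_zero hμ0 hμ0), one_smul,
        smul_smul ((μ*μ)⁻¹) μ, show (μ*μ)⁻¹ * μ = μ⁻¹ by field_simp,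
        sub_add_eq_sub_sub, smul_comm (op c) μ⁻¹ (g (μ • c)), one_smul]
    have hnμ : ‖μ‖ = 2^n := by rw [hμ]; norm_num
    have hfμ : ‖f (μ • c)‖ = 2^n * ‖f c‖ := by rw [e3, norm_smul, hnμ]
    calc ‖f (c^2) - (c • f c + op c • (μ⁻¹ • g (μ • c)))‖
        = ((2:ℝ)^n * 2^n)⁻¹ * ‖f ((μ • c)^2) - (μ • c) • f (μ • c) - op (μ • c) • g (μ • c)‖ := by
          rw [hid, norm_smul, norm_inv, norm_mul, hnμ]
      _ ≤ ((2:ℝ)^n * 2^n)⁻¹ * (θ * (2^n * ‖f c‖)) := by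
          apply mul_le_mul_of_nonneg_left _ (by positivity)
          rw [← hfμ]; exact h
      _ = θ * ‖f c‖ * (2⁻¹:ℝ)^n := by
          rw [inv_pow]
          field_simp
  have t1 : Tendsto (fun n : ℕ => c • f c + op c • (((2:ℂ)^n)⁻¹ • g ((2:ℂ)^n • c)))
      atTop (𝓝 (f (c^2))) := by
    rw [tendsto_iff_norm_sub_tendsto_zero]
    apply squeeze_zero (fun n => norm_nonneg _)
      (g := fun n : ℕ => θ * ‖f c‖ * (2⁻¹:ℝ)^n)
      (fun n => by rw [norm_sub_rev]; exact hbound2 n)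
    have : Tendsto (fun n : ℕ => (2⁻¹:ℝ)^n) atTop (𝓝 0) :=
      tendsto_pow_atTop_nhds_zero_of_lt_one (by norm_num) (by norm_num)
    simpa using this.const_mul (θ * ‖f c‖)
  have t2 : Tendsto (fun n : ℕ => c • f c + op c • (((2:ℂ)^n)⁻¹ • g ((2:ℂ)^n • c)))
      atTop (𝓝 (c • f c + op c • δ c)) :=
    tendsto_const_nhds.add ((hδ c).const_smul (op c))
  exact tendsto_nhds_unique t1 t2
end
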